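/- Let A be an n×n hidden Z-matrix. If there exists a vector x > 0 (all entries strictly positive) such that Ax ≥ 0 (componentwise), then A is a P₀-matrix, i.e., all principal minors of A are nonnegative. -/

import Mathlib

open Matrix

/-- A Z-matrix: all off-diagonal entries are nonpositive. -/
def IsZMatrix {ι : Type*} [Fintype ι] [DecidableEq ι] (A : Matrix ι ι ℝ) : Prop :=
  ∀ i j, i ≠ j → A i j ≤ 0

/-- A hidden Z-matrix: AX = Y for Z-matrices X, Y, with rᵀX + sᵀY > 0 for some r, s ≥ 0. -/
def IsHiddenZ {ι : Type*} [Fintype ι] [DecidableEq ι] (A : Matrix ι ι ℝ) : Prop :=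
  ∃ X Y : Matrix ι ι ℝ, ∃ r s : ι → ℝ,
    IsZMatrix X ∧ IsZMatrix Y ∧ A * X = Y ∧
    (∀ i, 0 ≤ r i) ∧ (∀ i, 0 ≤ s i) ∧
    (∀ j, 0 < (Matrix.vecMul r X + Matrix.vecMul s Y) j)

/-- The principal minor of `A` indexed by `α`. -/
def principalMinor {ι : Type*} [Fintype ι] [DecidableEq ι] (A : Matrix ι ι ℝ)
    (α : Finset ι) : ℝ :=
  (A.submatrix (fun i : {x // x ∈ α} => (i : ι)) (fun j : {x // x ∈ α} => (j : ι))).det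

/- Auxiliary lemmas -/

/-- Z-matrices and componentwise min: if `u i ≤ w i` then applying `X` to the
componentwise min dominates `X u` at coordinate `i`. -/
lemma zmeet {n : ℕ} (X : Matrix (Fin n) (Fin n) ℝ) (hX : IsZMatrix X) (u w : Fin n → ℝ)
    (i : Fin n) (hui : u i ≤ w i) :
    X.mulVec u i ≤ X.mulVec (fun j => min (u j) (w j)) i := by
  unfold Matrix.mulVec dotProduct
  apply Finset.sum_le_sum
  intro j _
  dsimp only
  by_cases hj : j = i
  · subst hj
    rw [min_eq_left hui]
  · exact mul_le_mul_of_nonpos_left (min_le_left _ _) (hX i j (fun h => hj h.symm))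

/-- If `M` is a Z-matrix and `M w ≥ 0` componentwise, then `M (w ∧ 0) ≥ 0` componentwise. -/
lemma zmeet0 {n : ℕ} (M : Matrix (Fin n) (Fin n) ℝ) (hM : IsZMatrix M) (w : Fin n → ℝ)
    (hw : ∀ i, 0 ≤ M.mulVec w i) (i : Fin n) :
    0 ≤ M.mulVec (fun j => min (w j) 0) i := by
  rcases le_total (w i) 0 with h | h
  · exact le_trans (hw i) (zmeet M hM w 0 i h)
  · have h0 : (0 : Fin n → ℝ) i ≤ w i := h
    have h1 := zmeet M hM 0 w i h0
    have h2 : (fun j => min ((0 : Fin n → ℝ) j) (w j)) = fun j => min (w j) 0 := by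
      funext j; simp [min_comm]
    rw [h2] at h1
    simpa [Matrix.mulVec_zero] using h1

/-- Weighted diagonal-dominance estimate for a Z-matrix: if `w ≤ t • xt` componentwise with
equality at `i₀`, then `t * (M xt) i₀ ≤ (M w) i₀`. -/
lemma zdom {n : ℕ} (M : Matrix (Fin n) (Fin n) ℝ) (hM : IsZMatrix M) (t : ℝ)
    (xt w : Fin n → ℝ) (i₀ : Fin n) (hwle : ∀ j, w j ≤ t * xt j) (hwi : w i₀ = t * xt i₀) :
    t * M.mulVec xt i₀ ≤ M.mulVec w i₀ := by
  have h1 : M.mulVec w i₀ - t * M.mulVec xt i₀ = ∑ j, M i₀ j * (w j - t * xt j) := by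
    simp only [Matrix.mulVec, dotProduct, Finset.mul_sum, ← Finset.sum_sub_distrib]
    congr 1; funext j; ring
  have h2 : 0 ≤ ∑ j, M i₀ j * (w j - t * xt j) := by
    apply Finset.sum_nonneg
    intro j _
    by_cases hj : j = i₀
    · subst hj; rw [hwi]; simp
    · have ha := hM i₀ j (fun h => hj h.symm)
      have hb := hwle j
      nlinarith
  linarith

/-- Core sign lemma: a hidden Z-matrix with `x > 0`, `Ax ≥ 0` admits no nonzero vector whose
sign is strictly reversed on its support. -/
lemma hiddenZ_sign {n : ℕ} (A X Y : Matrix (Fin n) (Fin n) ℝ) (r s x : Fin n → ℝ)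
    (hX : IsZMatrix X) (hY : IsZMatrix Y) (hAXY : A * X = Y)
    (hr : ∀ i, 0 ≤ r i) (hs : ∀ i, 0 ≤ s i)
    (hpos : ∀ j, 0 < (Matrix.vecMul r X + Matrix.vecMul s Y) j)
    (hx : ∀ i, 0 < x i) (hAx : ∀ i, 0 ≤ A.mulVec x i)
    (z : Fin n → ℝ) (hz : ∀ i, z i ≠ 0 → z i * A.mulVec z i < 0) : z = 0 := by
  -- L2 : a nonpositive vector with X v ≥ 0 and Y v ≥ 0 must be zero
  have L2 : ∀ v : Fin n → ℝ, (∀ i, v i ≤ 0) → (∀ i, 0 ≤ X.mulVec v i) →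
      (∀ i, 0 ≤ Y.mulVec v i) → v = 0 := by
    intro v hv hXv hYv
    have h1 : 0 ≤ r ⬝ᵥ X.mulVec v + s ⬝ᵥ Y.mulVec v := by
      apply add_nonneg <;>
      · apply Finset.sum_nonneg
        intro j _
        first
          | exact mul_nonneg (hr j) (hXv j)
          | exact mul_nonneg (hs j) (hYv j)
    have h2 : r ⬝ᵥ X.mulVec v + s ⬝ᵥ Y.mulVec v
        = ∑ j, (Matrix.vecMul r X + Matrix.vecMul s Y) j * v j := by
      rw [Matrix.dotProduct_mulVec, Matrix.dotProduct_mulVec]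
      simp only [dotProduct, Pi.add_apply, add_mul, Finset.sum_add_distrib]
    have h3 : ∀ j ∈ Finset.univ, (Matrix.vecMul r X + Matrix.vecMul s Y) j * v j ≤ 0 := by
      intro j _
      exact mul_nonpos_of_nonneg_of_nonpos (hpos j).le (hv j)
    have h4 : ∑ j, (Matrix.vecMul r X + Matrix.vecMul s Y) j * v j = 0 := by
      refine le_antisymm (Finset.sum_nonpos h3) ?_
      rw [← h2]; exact h1
    have h5 := (Finset.sum_eq_zero_iff_of_nonpos h3).mp h4
    funext j
    have h6 := h5 j (Finset.mem_univ j)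
    have h7 := (hpos j).ne'
    exact mul_eq_zero.mp h6 |>.resolve_left h7
  -- membership of nonneg part
  have key : ∀ w : Fin n → ℝ, (∀ i, 0 ≤ X.mulVec w i) → (∀ i, 0 ≤ Y.mulVec w i) →
      ∀ j, 0 ≤ w j := by
    intro w hXw hYw j
    have hm := L2 (fun j => min (w j) 0) (fun i => min_le_right _ _)
      (zmeet0 X hX w hXw) (zmeet0 Y hY w hYw)
    have := congrFun hm j
    rcases le_total (w j) 0 with h | h
    · rw [min_eq_left h] at this; exact this.ge
    · exact h
  -- X is injective
  have hker : ∀ u : Fin n → ℝ, X.mulVec u = 0 → u = 0 := by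
    intro u hu
    have hYu : Y.mulVec u = 0 := by
      rw [← hAXY, ← Matrix.mulVec_mulVec, hu, Matrix.mulVec_zero]
    have h1 : ∀ j, 0 ≤ u j := key u (fun i => by rw [hu]; rfl) (fun i => by rw [hYu]; rfl)
    have h2 : ∀ j, 0 ≤ -u j := by
      have hXu' : X.mulVec (-u) = 0 := by rw [Matrix.mulVec_neg, hu, neg_zero]
      have hYu' : Y.mulVec (-u) = 0 := by rw [Matrix.mulVec_neg, hYu, neg_zero]
      intro j
      exact key (-u) (fun i => by rw [hXu']; rfl) (fun i => by rw [hYu']; rfl) j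
    funext j
    have h2j := h2 j
    show u j = 0
    linarith [h1 j]
  -- X is surjective
  have hsurj : Function.Surjective X.mulVecLin := by
    rw [← LinearMap.injective_iff_surjective]
    intro a b hab
    have : X.mulVec (a - b) = 0 := by
      rw [Matrix.mulVec_sub]
      simp only [Matrix.mulVecLin_apply] at hab
      rw [hab, sub_self]
    have := hker _ this
    exact sub_eq_zero.mp this
  -- the positive preimage of x
  obtain ⟨xt, hxt⟩ := hsurj x
  rw [Matrix.mulVecLin_apply] at hxt
  have hYxt : Y.mulVec xt = A.mulVec x := by
    rw [← hAXY, ← Matrix.mulVec_mulVec, hxt]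
  have hxtnn : ∀ j, 0 ≤ xt j :=
    key xt (fun i => by rw [hxt]; exact (hx i).le) (fun i => by rw [hYxt]; exact hAx i)
  have hxtpos : ∀ j, 0 < xt j := by
    intro j
    rcases (hxtnn j).lt_or_eq with h | h
    · exact h
    · exfalso
      have hle : X.mulVec xt j ≤ 0 := by
        unfold Matrix.mulVec dotProduct
        apply Finset.sum_nonpos
        intro k _
        by_cases hk : k = j
        · subst hk; rw [← h]; simp
        · exact mul_nonpos_of_nonpos_of_nonneg (hX j k (fun hh => hk hh.symm)) (hxtnn k)
      rw [hxt] at hle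
      exact absurd (hx j) (not_lt.2 hle)
  -- main argument
  by_contra hzne
  obtain ⟨u, hu⟩ := hsurj z
  rw [Matrix.mulVecLin_apply] at hu
  have hune : u ≠ 0 := by
    intro h
    apply hzne
    rw [← hu, h, Matrix.mulVec_zero]
  obtain ⟨j₀, hj₀⟩ := Function.ne_iff.mp hune
  simp only [Pi.zero_apply] at hj₀
  obtain ⟨i₀, -, hmax⟩ := Finset.exists_max_image Finset.univ (fun j => |u j| / xt j)
    ⟨j₀, Finset.mem_univ j₀⟩
  set t : ℝ := |u i₀| / xt i₀ with ht_def
  have ht_pos : 0 < t :=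
    lt_of_lt_of_le (div_pos (abs_pos.2 hj₀) (hxtpos j₀)) (hmax j₀ (Finset.mem_univ j₀))
  have hbound : ∀ j, |u j| ≤ t * xt j := by
    intro j
    have := hmax j (Finset.mem_univ j)
    rw [div_le_iff₀ (hxtpos j)] at this
    linarith [this]
  have heq : |u i₀| = t * xt i₀ := by
    rw [ht_def]
    exact (div_mul_cancel₀ _ (hxtpos i₀).ne').symm
  set σ : ℝ := if 0 ≤ u i₀ then 1 else -1 with hσ_def
  set w : Fin n → ℝ := σ • u with hw_def
  have hσ2 : σ * σ = 1 := by
    rw [hσ_def]; split <;> norm_num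
  have hw_i₀ : w i₀ = t * xt i₀ := by
    rw [hw_def, hσ_def]
    by_cases h : 0 ≤ u i₀
    · simp only [h, if_true, Pi.smul_apply, smul_eq_mul, one_mul]
      rw [← heq, abs_of_nonneg h]
    · simp only [h, if_false, Pi.smul_apply, smul_eq_mul, neg_one_mul]
      rw [← heq, abs_of_neg (not_le.mp h)]
  have hw_le : ∀ j, w j ≤ t * xt j := by
    intro j
    refine le_trans ?_ (hbound j)
    rw [hw_def, hσ_def]
    split
    · simp only [Pi.smul_apply, smul_eq_mul, one_mul]; exact le_abs_self _
    · simp only [Pi.smul_apply, smul_eq_mul, neg_one_mul]; exact neg_le_abs _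
  have hXw : X.mulVec w i₀ = σ * z i₀ := by
    rw [hw_def, Matrix.mulVec_smul, hu]; rfl
  have hYw : Y.mulVec w i₀ = σ * A.mulVec z i₀ := by
    have : Y.mulVec u = A.mulVec z := by
      rw [← hAXY, ← Matrix.mulVec_mulVec, hu]
    rw [hw_def, Matrix.mulVec_smul, this]; rfl
  have h01 : t * x i₀ ≤ σ * z i₀ := by
    have := zdom X hX t xt w i₀ hw_le hw_i₀
    rw [hXw, hxt] at this; exact this
  have h02 : t * A.mulVec x i₀ ≤ σ * A.mulVec z i₀ := by
    have := zdom Y hY t xt w i₀ hw_le hw_i₀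
    rw [hYw, hYxt] at this; exact this
  have hσz_pos : 0 < σ * z i₀ := lt_of_lt_of_le (mul_pos ht_pos (hx i₀)) h01
  have hσAz : 0 ≤ σ * A.mulVec z i₀ :=
    le_trans (mul_nonneg ht_pos.le (hAx i₀)) h02
  have hz_ne : z i₀ ≠ 0 := by
    intro h
    rw [h, mul_zero] at hσz_pos
    exact lt_irrefl 0 hσz_pos
  have hfinal : 0 ≤ z i₀ * A.mulVec z i₀ := by
    have h := mul_nonneg hσz_pos.le hσAz
    have hre : (σ * z i₀) * (σ * A.mulVec z i₀) = z i₀ * A.mulVec z i₀ := by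
      rw [show (σ * z i₀) * (σ * A.mulVec z i₀) = (σ * σ) * (z i₀ * A.mulVec z i₀) by ring,
        hσ2, one_mul]
    rwa [hre] at h
  exact absurd (hz i₀ hz_ne) (not_lt.2 hfinal)

theorem hiddenZ_P0 {n : ℕ} (A : Matrix (Fin n) (Fin n) ℝ) (hA : IsHiddenZ A)
    (x : Fin n → ℝ) (hx : ∀ i, 0 < x i) (hAx : ∀ i, 0 ≤ A.mulVec x i) :
    ∀ α : Finset (Fin n), 0 ≤ principalMinor A α := by
  obtain ⟨X, Y, r, s, hX, hY, hAXY, hr, hs, hpos⟩ := hA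
  intro α
  by_contra hdet
  push_neg at hdet
  set B : Matrix {x // x ∈ α} {x // x ∈ α} ℝ :=
    A.submatrix (fun i : {x // x ∈ α} => (i : Fin n)) (fun j : {x // x ∈ α} => (j : Fin n))
    with hB_def
  have hdetB : B.det < 0 := hdet
  -- det (B + T • 1) > 0 for suitable large T
  have hgcont : Continuous fun u : ℝ => (1 + u • B).det :=
    Continuous.matrix_det (continuous_const.add (continuous_id.smul continuous_const))
  have hg0 : (1 + (0 : ℝ) • B).det = 1 := by simp
  have hev : ∀ᶠ u in nhds (0 : ℝ), 0 < (1 + u • B).det := by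
    have htd : Filter.Tendsto (fun u : ℝ => (1 + u • B).det) (nhds 0)
        (nhds ((1 + (0 : ℝ) • B).det)) := hgcont.continuousAt
    rw [hg0] at htd
    exact htd.eventually (eventually_gt_nhds (by norm_num))
  obtain ⟨δ, hδ, hball⟩ := Metric.eventually_nhds_iff.mp hev
  set T : ℝ := δ⁻¹ + 1 with hT_def
  have hT_pos : 0 < T := by positivity
  have hTinv : |T⁻¹| < δ := by
    rw [abs_of_pos (inv_pos.2 hT_pos), inv_lt_comm₀ hT_pos hδ]
    rw [hT_def]
    nlinarith [hδ, inv_pos.2 hδ]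
  have hfT : 0 < (B + T • (1 : Matrix {x // x ∈ α} {x // x ∈ α} ℝ)).det := by
    have hfact : B + T • (1 : Matrix {x // x ∈ α} {x // x ∈ α} ℝ)
        = T • (1 + T⁻¹ • B) := by
      rw [smul_add, smul_smul, mul_inv_cancel₀ hT_pos.ne', one_smul, add_comm]
    rw [hfact, Matrix.det_smul]
    apply mul_pos (pow_pos hT_pos _)
    apply hball
    rw [Real.dist_eq, sub_zero]
    exact hTinv
  -- IVT gives t* with det (B + t* • 1) = 0
  have hfcont : ContinuousOn (fun t : ℝ => (B + t • (1 : Matrix _ _ ℝ)).det) (Set.Icc 0 T) :=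
    (Continuous.matrix_det (continuous_const.add (continuous_id.smul continuous_const))).continuousOn
  have hmem : (0 : ℝ) ∈ Set.Icc ((B + (0:ℝ) • (1 : Matrix _ _ ℝ)).det)
      ((B + T • (1 : Matrix _ _ ℝ)).det) := by
    constructor
    · simpa using hdetB.le
    · exact hfT.le
  obtain ⟨t₀, ht₀mem, ht₀⟩ := intermediate_value_Icc hT_pos.le hfcont hmem
  have ht₀pos : 0 < t₀ := by
    rcases ht₀mem.1.lt_or_eq with h | h
    · exact h
    · exfalso
      rw [← h] at ht₀
      simp only [zero_smul, add_zero] at ht₀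
      rw [ht₀] at hdetB
      exact lt_irrefl 0 hdetB
  -- eigenvector
  obtain ⟨w, hwne, hweq⟩ := Matrix.exists_mulVec_eq_zero_iff.mpr ht₀
  have hBw : B.mulVec w = fun p => -t₀ * w p := by
    funext p
    have := congrFun hweq p
    rw [Matrix.add_mulVec, Matrix.smul_mulVec, Matrix.one_mulVec] at this
    simp only [Pi.add_apply, Pi.smul_apply, smul_eq_mul, Pi.zero_apply] at this
    linarith
  -- extension by zero
  set z : Fin n → ℝ := fun i => if h : i ∈ α then w ⟨i, h⟩ else 0 with hz_def
  have hzα : ∀ i (h : i ∈ α), z i = w ⟨i, h⟩ := by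
    intro i h; rw [hz_def]; exact dif_pos h
  have hz0 : ∀ i, i ∉ α → z i = 0 := by
    intro i h; rw [hz_def]; exact dif_neg h
  have hzne : z ≠ 0 := by
    intro h
    apply hwne
    funext p
    have := congrFun h p.1
    rw [hzα p.1 p.2] at this
    simpa using this
  have hAz : ∀ i (h : i ∈ α), A.mulVec z i = -t₀ * z i := by
    intro i hi
    have step1 : A.mulVec z i = ∑ j ∈ α, A i j * z j := by
      unfold Matrix.mulVec dotProduct
      refine (Finset.sum_subset (Finset.subset_univ α) ?_).symm
      intro j _ hj
      rw [hz0 j hj, mul_zero]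
    have step2 : ∑ j ∈ α, A i j * z j = B.mulVec w ⟨i, hi⟩ := by
      unfold Matrix.mulVec dotProduct
      rw [← Finset.sum_coe_sort α (fun j => A i j * z j)]
      apply Finset.sum_congr rfl
      intro p _
      rw [hzα p.1 p.2]
      simp [hB_def, Matrix.submatrix_apply]
    rw [step1, step2, hBw]
    rw [hzα i hi]
  -- contradiction with the sign lemma
  have hzzero : z = 0 := by
    apply hiddenZ_sign A X Y r s x hX hY hAXY hr hs hpos hx hAx z
    intro i hzi
    have hiα : i ∈ α := by
      by_contra h
      exact hzi (hz0 i h)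
    rw [hAz i hiα]
    have hzz : 0 < z i * z i := by
      rcases lt_or_gt_of_ne hzi with h | h
      · exact mul_pos_of_neg_of_neg h h
      · exact mul_pos h h
    nlinarith
  exact hzne hzzero
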